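/- Let n be an odd positive integer and let a, g ∈ (ZMod 2)[Y] be monic polynomials with a ∣ g and g ∣ (Yⁿ - 1) in (ZMod 2)[Y]. Let S = (ZMod 2)[X] ⧸ ⟨X²⟩ with w the residue class of X, and let C_w be the ideal of S[Y] ⧸ ⟨Yⁿ - 1⟩ generated by the image of g + w·a (where g and a are mapped into S[Y] via the inclusion ZMod 2 → S). Then the cardinality of C_w is 2^{2n − deg g − deg a}. -/

import Mathlib

open Polynomial

noncomputable section

/-- The chain ring `S = F₂ + wF₂` with `w² = 0`, realized as `(ZMod 2)[X] ⧸ ⟨X²⟩`. -/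
abbrev S : Type := Polynomial (ZMod 2) ⧸ Ideal.span ({X ^ 2} : Set (Polynomial (ZMod 2)))

/-- `w` is the residue class of `X` in `S`. -/
def w : S := Ideal.Quotient.mk _ (X : Polynomial (ZMod 2))

instance : CommRing S := Ideal.Quotient.commRing _

namespace CCAux

abbrev R2 : Type := Polynomial (ZMod 2)

lemma algS_eq (c : ZMod 2) :
    algebraMap (ZMod 2) S c = Ideal.Quotient.mk _ (C c : R2) := rfl

lemma w_mul_w : w * w = (0 : S) := by
  rw [w, ← map_mul, ← sq]
  exact Ideal.Quotient.eq_zero_iff_mem.mpr (Ideal.subset_span rfl)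

def eps : S →+* ZMod 2 :=
  Ideal.Quotient.lift _ (evalRingHom 0) (by
    intro p hp
    rw [Ideal.mem_span_singleton] at hp
    obtain ⟨q, rfl⟩ := hp
    simp)

@[simp] lemma eps_algebraMap (c : ZMod 2) : eps (algebraMap (ZMod 2) S c) = c := by
  rw [algS_eq]; simp [eps]

@[simp] lemma eps_w : eps w = 0 := by
  rw [w]; simp [eps]

lemma S_repr (s : S) :
    ∃ c₀ c₁ : ZMod 2, s = algebraMap (ZMod 2) S c₀ + algebraMap (ZMod 2) S c₁ * w := by
  obtain ⟨p, rfl⟩ := Ideal.Quotient.mk_surjective s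
  refine ⟨p.coeff 0, p.coeff 1, ?_⟩
  rw [algS_eq, algS_eq, w, ← map_mul, ← map_add]
  rw [Ideal.Quotient.mk_eq_mk_iff_sub_mem]
  rw [Ideal.mem_span_singleton]
  rw [X_pow_dvd_iff]
  intro d hd
  interval_cases d <;> simp

lemma S_indep {c₀ c₁ : ZMod 2}
    (h : algebraMap (ZMod 2) S c₀ + algebraMap (ZMod 2) S c₁ * w = 0) :
    c₀ = 0 ∧ c₁ = 0 := by
  rw [algS_eq, algS_eq, w, ← map_mul, ← map_add] at h
  rw [Ideal.Quotient.eq_zero_iff_mem, Ideal.mem_span_singleton, X_pow_dvd_iff] at h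
  have h0 := h 0 (by norm_num)
  have h1 := h 1 (by norm_num)
  simp at h0 h1
  exact ⟨h0, h1⟩

lemma polyS_repr (P : Polynomial S) :
    ∃ p q : R2, P = p.map (algebraMap (ZMod 2) S) + C w * q.map (algebraMap (ZMod 2) S) := by
  induction P using Polynomial.induction_on' with
  | add f g hf hg =>
    obtain ⟨p1, q1, rfl⟩ := hf
    obtain ⟨p2, q2, rfl⟩ := hg
    exact ⟨p1 + p2, q1 + q2, by rw [Polynomial.map_add, Polynomial.map_add]; ring⟩
  | monomial k s =>
    obtain ⟨c₀, c₁, rfl⟩ := S_repr s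
    refine ⟨monomial k c₀, monomial k c₁, ?_⟩
    rw [map_monomial, map_monomial, C_mul_monomial, ← map_add]
    rw [mul_comm]

lemma polyS_indep {p q : R2}
    (h : p.map (algebraMap (ZMod 2) S) + C w * q.map (algebraMap (ZMod 2) S) = 0) :
    p = 0 ∧ q = 0 := by
  have key : ∀ k : ℕ, p.coeff k = 0 ∧ q.coeff k = 0 := by
    intro k
    have := congrArg (fun P => Polynomial.coeff P k) h
    simp only [coeff_add, coeff_C_mul, coeff_map, coeff_zero] at this
    rw [mul_comm] at this
    exact S_indep this
  constructor <;> (ext k; simp only [coeff_zero])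
  · exact (key k).1
  · exact (key k).2

end CCAux

namespace CCAux

variable (n : ℕ)

abbrev fR (n : ℕ) : R2 := X ^ n - 1
abbrev fS (n : ℕ) : Polynomial S := X ^ n - 1
abbrev Rq (n : ℕ) := R2 ⧸ Ideal.span ({fR n} : Set R2)
abbrev Tq (n : ℕ) := Polynomial S ⧸ Ideal.span ({fS n} : Set (Polynomial S))

lemma map_fR (n : ℕ) : (fR n).map (algebraMap (ZMod 2) S) = fS n := by
  simp [fR, fS, Polynomial.map_sub, Polynomial.map_pow, Polynomial.map_one, Polynomial.map_X]

lemma map_eps_map (p : R2) : (p.map (algebraMap (ZMod 2) S)).map eps = p := by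
  rw [Polynomial.map_map]
  have : eps.comp (algebraMap (ZMod 2) S) = RingHom.id (ZMod 2) := by
    ext c
    · simp
  rw [this, Polynomial.map_id]

lemma map_eps_combo (p q : R2) :
    ((p.map (algebraMap (ZMod 2) S) + C w * q.map (algebraMap (ZMod 2) S)).map eps) = p := by
  rw [Polynomial.map_add, Polynomial.map_mul, map_C, eps_w, C_0, zero_mul, add_zero, map_eps_map]

def Phi (n : ℕ) : Tq n →+* Rq n :=
  Ideal.Quotient.lift _ ((Ideal.Quotient.mk (Ideal.span ({fR n} : Set R2))).comp (mapRingHom eps))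
    (by
      intro P hP
      rw [Ideal.mem_span_singleton] at hP
      obtain ⟨Q, rfl⟩ := hP
      rw [RingHom.comp_apply, coe_mapRingHom, Polynomial.map_mul]
      have : (fS n).map eps = fR n := by
        simp [fR, fS, Polynomial.map_sub, Polynomial.map_pow, Polynomial.map_one, Polynomial.map_X]
      rw [this]
      exact Ideal.Quotient.eq_zero_iff_mem.mpr
        (Ideal.mem_span_singleton.mpr (dvd_mul_right _ _)))

lemma Phi_mk (P : Polynomial S) :
    Phi n (Ideal.Quotient.mk _ P) = Ideal.Quotient.mk _ (P.map eps) :=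
  Ideal.Quotient.lift_mk _ _ _

def toLinZ2 {M N : Type*} [AddCommGroup M] [AddCommGroup N] [Module (ZMod 2) M]
    [Module (ZMod 2) N] (f : M →+ N) : M →ₗ[ZMod 2] N :=
  { f with
    map_smul' := by
      intro c x
      exact (f.toZModLinearMap 2).map_smul c x }

def PhiL (n : ℕ) : Tq n →ₗ[ZMod 2] Rq n := toLinZ2 (Phi n).toAddMonoidHom

lemma PhiL_apply (x : Tq n) : PhiL n x = Phi n x := rfl

end CCAux

namespace CCAux

variable (n : ℕ)

def thetaPre (n : ℕ) : R2 →ₗ[ZMod 2] Tq n :=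
  toLinZ2 ((Ideal.Quotient.mk (Ideal.span ({fS n} : Set (Polynomial S)))).toAddMonoidHom.comp
    ((AddMonoidHom.mulLeft (C w : Polynomial S)).comp
      (mapRingHom (algebraMap (ZMod 2) S)).toAddMonoidHom))

lemma thetaPre_apply (q : R2) :
    thetaPre n q = Ideal.Quotient.mk _ (C w * q.map (algebraMap (ZMod 2) S)) := rfl

lemma thetaPre_eq_zero_iff (q : R2) : thetaPre n q = 0 ↔ fR n ∣ q := by
  constructor
  · intro h
    rw [thetaPre_apply, Ideal.Quotient.eq_zero_iff_mem, Ideal.mem_span_singleton] at h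
    obtain ⟨P, hP⟩ := h
    obtain ⟨p0, p1, rfl⟩ := polyS_repr P
    rw [mul_add] at hP
    have e : ((fR n * p0).map (algebraMap (ZMod 2) S) +
        C w * ((fR n * p1 - q).map (algebraMap (ZMod 2) S))) = 0 := by
      have m1 : (fR n * p0).map (algebraMap (ZMod 2) S) =
          fS n * p0.map (algebraMap (ZMod 2) S) := by
        rw [Polynomial.map_mul, map_fR]
      have m2 : (fR n * p1 - q).map (algebraMap (ZMod 2) S) =
          fS n * p1.map (algebraMap (ZMod 2) S) - q.map (algebraMap (ZMod 2) S) := by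
        rw [Polynomial.map_sub, Polynomial.map_mul, map_fR]
      rw [m1, m2]
      linear_combination -hP
    obtain ⟨h0, h1⟩ := polyS_indep e
    exact ⟨p1, (sub_eq_zero.mp h1).symm⟩
  · rintro ⟨r, rfl⟩
    rw [thetaPre_apply]
    apply Ideal.Quotient.eq_zero_iff_mem.mpr
    apply Ideal.mem_span_singleton.mpr
    rw [Polynomial.map_mul, map_fR]
    exact ⟨C w * r.map (algebraMap (ZMod 2) S), by ring⟩

def theta (n : ℕ) : Rq n →ₗ[ZMod 2] Tq n :=
  (Submodule.liftQ ((Ideal.span ({fR n} : Set R2)).restrictScalars (ZMod 2)) (thetaPre n)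
    (fun q hq => LinearMap.mem_ker.mpr
      ((thetaPre_eq_zero_iff n q).mpr (Ideal.mem_span_singleton.mp hq)))).comp
  (Submodule.Quotient.restrictScalarsEquiv (ZMod 2)
    (Ideal.span ({fR n} : Set R2))).symm.toLinearMap

lemma theta_mk (q : R2) :
    theta n (Ideal.Quotient.mk _ q) =
      Ideal.Quotient.mk _ (C w * q.map (algebraMap (ZMod 2) S)) := by
  rw [theta, ← Ideal.Quotient.mk_eq_mk]
  simp only [LinearMap.comp_apply, LinearEquiv.coe_toLinearMap,
    Submodule.Quotient.restrictScalarsEquiv_symm_mk, Submodule.liftQ_apply, thetaPre_apply]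

lemma theta_injective : Function.Injective (theta n) := by
  rw [injective_iff_map_eq_zero]
  intro z hz
  obtain ⟨q, rfl⟩ := Ideal.Quotient.mk_surjective z
  rw [theta_mk, ← thetaPre_apply, thetaPre_eq_zero_iff] at hz
  exact Ideal.Quotient.eq_zero_iff_mem.mpr (Ideal.mem_span_singleton.mpr hz)

end CCAux

namespace CCAux
set_option maxHeartbeats 1000000
set_option synthInstance.maxHeartbeats 400000

def toLinEquivZ2 {M N : Type*} [AddCommGroup M] [AddCommGroup N] [Module (ZMod 2) M]
    [Module (ZMod 2) N] (e : M ≃+ N) : M ≃ₗ[ZMod 2] N :=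
  { e with
    map_smul' := by
      intro c x
      exact ZMod.map_smul e.toAddMonoidHom c x }

lemma natcard_eq_pow_finrank (V : Type*) [AddCommGroup V] [Module (ZMod 2) V]
    [FiniteDimensional (ZMod 2) V] : Nat.card V = 2 ^ Module.finrank (ZMod 2) V := by
  have : Finite V := Module.finite_of_finite (ZMod 2)
  have : Fintype V := Fintype.ofFinite V
  rw [Nat.card_eq_fintype_card, Module.card_eq_pow_finrank (K := ZMod 2), ZMod.card]

lemma fR_monic {n : ℕ} (hn : 0 < n) : (fR n).Monic := by
  have := monic_X_pow_sub_C (1 : ZMod 2) hn.ne'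
  simpa using this

lemma fS_monic {n : ℕ} (hn : 0 < n) : (fS n).Monic := by
  have := monic_X_pow_sub_C (1 : S) hn.ne'
  simpa using this

lemma natDegree_fR (n : ℕ) : (fR n).natDegree = n := by
  rw [show fR n = X ^ n - C 1 by rw [C_1], natDegree_X_pow_sub_C]

lemma finDimRq {n : ℕ} (hn : 0 < n) : FiniteDimensional (ZMod 2) (Rq n) :=
  Module.Finite.of_basis (AdjoinRoot.powerBasis' (fR_monic hn)).basis

lemma finrank_Rq {n : ℕ} (hn : 0 < n) : Module.finrank (ZMod 2) (Rq n) = n := by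
  have h1 : Module.finrank (ZMod 2) (AdjoinRoot (fR n)) =
      (AdjoinRoot.powerBasis' (fR_monic hn)).dim :=
    (AdjoinRoot.powerBasis' (fR_monic hn)).finrank
  rw [AdjoinRoot.powerBasis'_dim, natDegree_fR] at h1
  exact h1

lemma finrank_quot_d {d : R2} (hd : d.Monic) :
    Module.finrank (ZMod 2) (R2 ⧸ Ideal.span ({d} : Set R2)) = d.natDegree := by
  have h1 : Module.finrank (ZMod 2) (AdjoinRoot d) = (AdjoinRoot.powerBasis' hd).dim :=
    (AdjoinRoot.powerBasis' hd).finrank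
  rw [AdjoinRoot.powerBasis'_dim] at h1
  exact h1

lemma finrank_span_mk {n : ℕ} (hn : 0 < n) {d : R2} (hd : d.Monic) (hdvd : d ∣ fR n) :
    Module.finrank (ZMod 2)
      ((Ideal.span {Ideal.Quotient.mk (Ideal.span ({fR n} : Set R2)) d}).restrictScalars
        (ZMod 2)) = n - d.natDegree := by
  haveI := finDimRq hn
  have hIJ : Ideal.span ({fR n} : Set R2) ≤ Ideal.span ({d} : Set R2) :=
    Ideal.span_singleton_le_span_singleton.mpr hdvd
  have hmap : Ideal.map (Ideal.Quotient.mk (Ideal.span ({fR n} : Set R2)))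
      (Ideal.span ({d} : Set R2)) =
      Ideal.span {Ideal.Quotient.mk (Ideal.span ({fR n} : Set R2)) d} := by
    rw [Ideal.map_span, Set.image_singleton]
  have key := Submodule.finrank_quotient_add_finrank
    ((Ideal.span {Ideal.Quotient.mk (Ideal.span ({fR n} : Set R2)) d}).restrictScalars (ZMod 2))
  have e2 : (Rq n ⧸ Ideal.span {Ideal.Quotient.mk (Ideal.span ({fR n} : Set R2)) d})
      ≃+* (R2 ⧸ Ideal.span ({d} : Set R2)) :=
    hmap ▸ DoubleQuot.quotQuotEquivQuotOfLE hIJ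
  have e3 : (Rq n ⧸ (Ideal.span {Ideal.Quotient.mk (Ideal.span ({fR n} : Set R2)) d}).restrictScalars (ZMod 2))
      ≃ₗ[ZMod 2] (R2 ⧸ Ideal.span ({d} : Set R2)) :=
    (Submodule.Quotient.restrictScalarsEquiv (ZMod 2) _).trans (toLinEquivZ2 e2.toAddEquiv)
  have hq := e3.finrank_eq
  rw [finrank_quot_d hd] at hq
  rw [hq, finrank_Rq hn] at key
  have hdn : d.natDegree ≤ n := by
    have := Polynomial.natDegree_le_of_dvd hdvd (fR_monic hn).ne_zero
    rwa [natDegree_fR] at this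
  omega

lemma mul_expand (u v p q : R2) :
    (u.map (algebraMap (ZMod 2) S) + C w * v.map (algebraMap (ZMod 2) S)) *
      (p.map (algebraMap (ZMod 2) S) + C w * q.map (algebraMap (ZMod 2) S)) =
    (u*p).map (algebraMap (ZMod 2) S) +
      C w * ((u*q + v*p).map (algebraMap (ZMod 2) S)) := by
  have hww : (C w : Polynomial S) * C w = 0 := by rw [← C_mul, w_mul_w, C_0]
  simp only [Polynomial.map_add, Polynomial.map_mul]
  linear_combination (v.map (algebraMap (ZMod 2) S) * q.map (algebraMap (ZMod 2) S)) * hww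

end CCAux

set_option maxHeartbeats 4000000
set_option synthInstance.maxHeartbeats 1000000
open CCAux

/-- The cyclic code `C_w = ⟨g + w·a⟩` of odd length `n` over `S = F₂ + wF₂`, with
`a ∣ g ∣ Yⁿ - 1` over `ZMod 2`, has cardinality `2^{2n - deg g - deg a}`. -/
theorem card_cyclic_code_over_S (n : ℕ) (hodd : Odd n) (hpos : 0 < n)
    (a g : Polynomial (ZMod 2)) (ha : a.Monic) (hg : g.Monic)
    (hag : a ∣ g) (hgn : g ∣ (X ^ n - 1)) :
    Nat.card
      (Ideal.span {Ideal.Quotient.mk (Ideal.span ({X ^ n - 1} : Set (Polynomial S)))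
          (g.map (algebraMap (ZMod 2) S) + C w * a.map (algebraMap (ZMod 2) S))} :
        Ideal (Polynomial S ⧸ Ideal.span ({X ^ n - 1} : Set (Polynomial S)))) =
      2 ^ (2 * n - g.natDegree - a.natDegree) := by
  classical
  obtain ⟨h, hh⟩ : ∃ h, fR n = g * h := hgn
  have hgn' : g ∣ fR n := ⟨h, hh⟩
  have han' : a ∣ fR n := dvd_trans hag hgn'
  obtain ⟨b, hb⟩ : ∃ b, g = a * b := hag
  have hg0 : g ≠ 0 := hg.ne_zero
  have hsq : Squarefree (fR n) := by
    have hn2 : ((n : ZMod 2)) ≠ 0 := by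
      rw [Ne, ZMod.natCast_eq_zero_iff]
      obtain ⟨k, rfl⟩ := hodd
      omega
    have hsep := Polynomial.separable_X_pow_sub_C (1 : ZMod 2) hn2 one_ne_zero
    have hsep' : (fR n).Separable := by
      rw [show fR n = X ^ n - C 1 by rw [C_1]]
      exact hsep
    exact hsep'.squarefree
  have hcop : IsCoprime h b := by
    rw [← EuclideanDomain.gcd_isUnit_iff]
    apply hsq
    calc EuclideanDomain.gcd h b * EuclideanDomain.gcd h b
        ∣ h * b := mul_dvd_mul (EuclideanDomain.gcd_dvd_left _ _)
          (EuclideanDomain.gcd_dvd_right _ _)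
      _ ∣ fR n := ⟨a, by rw [hh, hb]; ring⟩
  obtain ⟨p, q, hpq⟩ := hcop
  -- finiteness
  haveI : Module.Finite (ZMod 2) S :=
    Module.Finite.of_basis (AdjoinRoot.powerBasis' (monic_X_pow (R := ZMod 2) (n := 2))).basis
  haveI : Module.Finite S (Tq n) :=
    Module.Finite.of_basis (AdjoinRoot.powerBasis' (fS_monic hpos)).basis
  haveI : Module.Finite (ZMod 2) (Tq n) := Module.Finite.trans S (Tq n)
  haveI := finDimRq hpos
  -- the code ideal
  set CI : Ideal (Tq n) :=
    Ideal.span {Ideal.Quotient.mk (Ideal.span ({X ^ n - 1} : Set (Polynomial S)))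
      (g.map (algebraMap (ZMod 2) S) + C w * a.map (algebraMap (ZMod 2) S))} with hCIdef
  have mem_CI : ∀ x : Tq n, x ∈ CI ↔ ∃ u v : R2,
      x = Ideal.Quotient.mk _
        ((u*g).map (algebraMap (ZMod 2) S) + C w * ((u*a + v*g).map (algebraMap (ZMod 2) S))) := by
    intro x
    rw [hCIdef]
    constructor
    · intro hx
      obtain ⟨t, ht⟩ := Ideal.mem_span_singleton'.mp hx
      obtain ⟨P, rfl⟩ := Ideal.Quotient.mk_surjective t
      obtain ⟨u, v, rfl⟩ := polyS_repr P
      exact ⟨u, v, by rw [← ht, ← map_mul, mul_expand]⟩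
    · rintro ⟨u, v, rfl⟩
      exact Ideal.mem_span_singleton'.mpr
        ⟨Ideal.Quotient.mk _
            (u.map (algebraMap (ZMod 2) S) + C w * v.map (algebraMap (ZMod 2) S)),
          by rw [← map_mul, mul_expand]⟩
  have Phi_val : ∀ u v : R2,
      Phi n (Ideal.Quotient.mk _
        ((u*g).map (algebraMap (ZMod 2) S) + C w * ((u*a + v*g).map (algebraMap (ZMod 2) S)))) =
      Ideal.Quotient.mk (Ideal.span ({fR n} : Set R2)) (u*g) := by
    intro u v
    rw [Phi_mk, map_eps_combo]
  have Phi_theta : ∀ r : R2,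
      Phi n (Ideal.Quotient.mk _ (C w * r.map (algebraMap (ZMod 2) S))) = 0 := by
    intro r
    rw [Phi_mk]
    have : (C w * r.map (algebraMap (ZMod 2) S)).map eps = 0 := by
      rw [Polynomial.map_mul, map_C, eps_w, C_0, zero_mul]
    rw [this, map_zero]
  -- range computation
  have hrange : Submodule.map (PhiL n) (CI.restrictScalars (ZMod 2)) =
      (Ideal.span {Ideal.Quotient.mk (Ideal.span ({fR n} : Set R2)) g}).restrictScalars
        (ZMod 2) := by
    ext x
    simp only [Submodule.mem_map, Submodule.restrictScalars_mem]
    constructor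
    · rintro ⟨y, hy, rfl⟩
      obtain ⟨u, v, rfl⟩ := (mem_CI y).mp hy
      rw [PhiL_apply, Phi_val]
      exact Ideal.mem_span_singleton'.mpr ⟨Ideal.Quotient.mk _ u, by rw [← map_mul]⟩
    · intro hx
      obtain ⟨r, hr⟩ := Ideal.mem_span_singleton'.mp hx
      obtain ⟨u, rfl⟩ := Ideal.Quotient.mk_surjective r
      rw [← map_mul] at hr
      refine ⟨Ideal.Quotient.mk _
          ((u*g).map (algebraMap (ZMod 2) S) +
            C w * ((u*a + 0*g).map (algebraMap (ZMod 2) S))),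
        (mem_CI _).mpr ⟨u, 0, rfl⟩, ?_⟩
      rw [PhiL_apply, Phi_val]
      exact hr
  -- kernel computation
  have hker : CI.restrictScalars (ZMod 2) ⊓ LinearMap.ker (PhiL n) =
      Submodule.map (theta n)
        ((Ideal.span {Ideal.Quotient.mk (Ideal.span ({fR n} : Set R2)) a}).restrictScalars
          (ZMod 2)) := by
    ext x
    simp only [Submodule.mem_inf, Submodule.restrictScalars_mem, Submodule.mem_map,
      LinearMap.mem_ker]
    constructor
    · rintro ⟨hxC, hx0⟩
      obtain ⟨u, v, rfl⟩ := (mem_CI x).mp hxC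
      rw [PhiL_apply, Phi_val] at hx0
      have hdv : fR n ∣ u * g := Ideal.mem_span_singleton.mp (Ideal.Quotient.eq_zero_iff_mem.mp hx0)
      obtain ⟨s, hs⟩ := hdv
      have hu : u = h * s := mul_left_cancel₀ hg0 (by linear_combination hs + s * hh)
      refine ⟨Ideal.Quotient.mk _ (a * (h*s + v*b)),
        Ideal.mem_span_singleton'.mpr
          ⟨Ideal.Quotient.mk _ (h*s + v*b), by rw [← map_mul, mul_comm]⟩, ?_⟩
      rw [theta_mk]
      have e1 : u*a + v*g = a*(h*s + v*b) := by rw [hu, hb]; ring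
      rw [← e1]
      have e0 : Ideal.Quotient.mk (Ideal.span ({fS n} : Set (Polynomial S)))
          ((u*g).map (algebraMap (ZMod 2) S)) = 0 := by
        rw [hs, Polynomial.map_mul, map_fR]
        exact Ideal.Quotient.eq_zero_iff_mem.mpr
          (Ideal.mem_span_singleton.mpr (dvd_mul_right _ _))
      rw [map_add, e0, zero_add]
    · rintro ⟨y, hy, rfl⟩
      obtain ⟨r, hr⟩ := Ideal.mem_span_singleton'.mp hy
      obtain ⟨t, rfl⟩ := Ideal.Quotient.mk_surjective r
      rw [← map_mul] at hr
      rw [← hr, theta_mk]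
      constructor
      · apply (mem_CI _).mpr
        refine ⟨t*p*h, t*q, ?_⟩
        have e2 : (t*p*h)*a + (t*q)*g = t*a := by
          linear_combination (t*a)*hpq + (t*q)*hb
        have e3 : Ideal.Quotient.mk (Ideal.span ({fS n} : Set (Polynomial S)))
            (((t*p*h)*g).map (algebraMap (ZMod 2) S)) = 0 := by
          have e4 : (t*p*h)*g = fR n * (t*p) := by linear_combination (-(t*p))*hh
          rw [e4, Polynomial.map_mul, map_fR]
          exact Ideal.Quotient.eq_zero_iff_mem.mpr
            (Ideal.mem_span_singleton.mpr (dvd_mul_right _ _))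
        rw [e2, map_add, e3, zero_add]
      · rw [PhiL_apply]
        exact Phi_theta _
  -- counting
  have hcard1 : Nat.card CI = Nat.card (CI.restrictScalars (ZMod 2)) :=
    Nat.card_congr (Equiv.subtypeEquivRight (fun x => Iff.rfl))
  have hrank := LinearMap.finrank_range_add_finrank_ker ((PhiL n).domRestrict
    (CI.restrictScalars (ZMod 2)))
  have hrangeval : Module.finrank (ZMod 2)
      (LinearMap.range ((PhiL n).domRestrict (CI.restrictScalars (ZMod 2)))) =
      n - g.natDegree := by
    rw [LinearMap.range_domRestrict, hrange]
    exact finrank_span_mk hpos hg hgn'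
  have hsub : Submodule.map (CI.restrictScalars (ZMod 2)).subtype
      (LinearMap.ker ((PhiL n).domRestrict (CI.restrictScalars (ZMod 2)))) =
      CI.restrictScalars (ZMod 2) ⊓ LinearMap.ker (PhiL n) := by
    ext x
    simp only [Submodule.mem_map, LinearMap.mem_ker, Submodule.mem_inf,
      LinearMap.domRestrict_apply, Submodule.coe_subtype, Subtype.exists, exists_and_left,
      exists_prop, exists_eq_right_right]
    tauto
  have hkerval : Module.finrank (ZMod 2)
      (LinearMap.ker ((PhiL n).domRestrict (CI.restrictScalars (ZMod 2)))) =
      n - a.natDegree := by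
    have e := Submodule.equivMapOfInjective (CI.restrictScalars (ZMod 2)).subtype
      (Submodule.injective_subtype _)
      (LinearMap.ker ((PhiL n).domRestrict (CI.restrictScalars (ZMod 2))))
    rw [e.finrank_eq, hsub, hker]
    have e2 := Submodule.equivMapOfInjective (theta n) (theta_injective n)
      ((Ideal.span {Ideal.Quotient.mk (Ideal.span ({fR n} : Set R2)) a}).restrictScalars (ZMod 2))
    rw [← e2.finrank_eq]
    exact finrank_span_mk hpos ha han'
  have hdg : g.natDegree ≤ n := by
    have := Polynomial.natDegree_le_of_dvd hgn' (fR_monic hpos).ne_zero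
    rwa [natDegree_fR] at this
  have hda : a.natDegree ≤ n := by
    have := Polynomial.natDegree_le_of_dvd han' (fR_monic hpos).ne_zero
    rwa [natDegree_fR] at this
  rw [hcard1, natcard_eq_pow_finrank]
  congr 1
  omega
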